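/- H and K are first integrals of the unperturbed Lerman–Umanskiĭ system: for all λ, ω ∈ ℝ and all x ∈ ℝ⁴, ⟨∇H(x), F(0, x)⟩ = 0 and ⟨∇K(x), F(0, x)⟩ = 0, where ⟨·,·⟩ is the Euclidean inner product on ℝ⁴ and ∇ denotes the gradient. -/

import Mathlib

open Real

lemma inner_gradient_eq_of_hasFDerivAt {E : Type*} [NormedAddCommGroup E]
    [InnerProductSpace ℝ E] [CompleteSpace E] {f : E → ℝ} {L : E →L[ℝ] ℝ} {x : E}
    (h : HasFDerivAt f L x) (v : E) : (inner ℝ (gradient f x) v : ℝ) = L v := by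
  rw [h.hasGradientAt.gradient, InnerProductSpace.toDual_symm_apply]

/-- **`H` and `K` are first integrals of the unperturbed Lerman–Umanskiĭ system.**
For all `λ, ω ∈ ℝ` and `x ∈ ℝ⁴`, `⟨∇H(x), F(0,x)⟩ = 0` and `⟨∇K(x), F(0,x)⟩ = 0`. -/
theorem lerman_umanskii_first_integrals
    (lam ω : ℝ)
    (F : ℝ → EuclideanSpace ℝ (Fin 4) → EuclideanSpace ℝ (Fin 4))
    (H K : EuclideanSpace ℝ (Fin 4) → ℝ)
    (hF : ∀ ε x, F ε x =
      WithLp.toLp 2 ![lam * x 0 - ω * x 1 - 2 * Real.sqrt 2 * lam * x 2 * ((x 2)^2 + (x 3)^2) + ε * x 1,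
        ω * x 0 + lam * x 1 - 2 * Real.sqrt 2 * lam * x 3 * ((x 2)^2 + (x 3)^2),
        -lam * x 2 - ω * x 3 + 2 * Real.sqrt 2 * lam * x 0 * ((x 0)^2 + (x 1)^2) + ε * x 3,
        ω * x 2 - lam * x 3 + 2 * Real.sqrt 2 * lam * x 1 * ((x 0)^2 + (x 1)^2)])
    (hH : ∀ x, H x = lam * (x 0 * x 2 + x 1 * x 3) - ω * (x 1 * x 2 - x 0 * x 3)
      - lam / Real.sqrt 2 * (((x 0)^2 + (x 1)^2)^2 + ((x 2)^2 + (x 3)^2)^2))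
    (hK : ∀ x, K x = x 1 * x 2 - x 0 * x 3) :
    ∀ x, (inner ℝ (gradient H x) (F 0 x) : ℝ) = 0 ∧
      (inner ℝ (gradient K x) (F 0 x) : ℝ) = 0 := by
  have hHfun : H = fun x : EuclideanSpace ℝ (Fin 4) =>
      lam * (x 0 * x 2 + x 1 * x 3) - ω * (x 1 * x 2 - x 0 * x 3)
      - lam / Real.sqrt 2 * ((x 0 * x 0 + x 1 * x 1) * (x 0 * x 0 + x 1 * x 1)
        + (x 2 * x 2 + x 3 * x 3) * (x 2 * x 2 + x 3 * x 3)) := by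
    funext y; rw [hH]; ring
  have hKfun : K = fun x : EuclideanSpace ℝ (Fin 4) => x 1 * x 2 - x 0 * x 3 := funext hK
  intro x
  have hp : ∀ i : Fin 4, HasFDerivAt (fun y : EuclideanSpace ℝ (Fin 4) => y i)
      (EuclideanSpace.proj i : EuclideanSpace ℝ (Fin 4) →L[ℝ] ℝ) x := fun i => ContinuousLinearMap.hasFDerivAt
      (EuclideanSpace.proj i : EuclideanSpace ℝ (Fin 4) →L[ℝ] ℝ)
  have hHd : HasFDerivAt (fun x : EuclideanSpace ℝ (Fin 4) =>
      lam * (x 0 * x 2 + x 1 * x 3) - ω * (x 1 * x 2 - x 0 * x 3)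
      - lam / Real.sqrt 2 * ((x 0 * x 0 + x 1 * x 1) * (x 0 * x 0 + x 1 * x 1)
        + (x 2 * x 2 + x 3 * x 3) * (x 2 * x 2 + x 3 * x 3))) _ x :=
    (((((hp 0).mul (hp 2)).add ((hp 1).mul (hp 3))).const_mul lam).sub
      ((((hp 1).mul (hp 2)).sub ((hp 0).mul (hp 3))).const_mul ω)).sub
      ((((((hp 0).mul (hp 0)).add ((hp 1).mul (hp 1))).mul
          (((hp 0).mul (hp 0)).add ((hp 1).mul (hp 1)))).add
        ((((hp 2).mul (hp 2)).add ((hp 3).mul (hp 3))).mul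
          (((hp 2).mul (hp 2)).add ((hp 3).mul (hp 3))))).const_mul (lam / Real.sqrt 2))
  have hKd : HasFDerivAt (fun x : EuclideanSpace ℝ (Fin 4) => x 1 * x 2 - x 0 * x 3) _ x :=
    ((hp 1).mul (hp 2)).sub ((hp 0).mul (hp 3))
  have h2 : Real.sqrt 2 * Real.sqrt 2 = 2 := Real.mul_self_sqrt (by norm_num)
  have h2ne : Real.sqrt 2 ≠ 0 := by positivity
  constructor
  · rw [hHfun, inner_gradient_eq_of_hasFDerivAt hHd, hF]
    simp only [ContinuousLinearMap.sub_apply, ContinuousLinearMap.add_apply,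
      ContinuousLinearMap.smul_apply, ContinuousLinearMap.coe_smul', Pi.smul_apply,
      PiLp.proj_apply, smul_eq_mul, PiLp.toLp_apply, Pi.add_apply, Pi.mul_apply]
    simp only [Matrix.cons_val_zero, Matrix.cons_val_one, Matrix.head_cons,
      Matrix.cons_val_two, Matrix.tail_cons, Matrix.cons_val_three]
    have hdiv : lam / Real.sqrt 2 = lam * Real.sqrt 2 / 2 := by
      rw [div_eq_div_iff h2ne two_ne_zero]
      linear_combination (-lam) * h2
    rw [hdiv]
    ring
  · rw [hKfun, inner_gradient_eq_of_hasFDerivAt hKd, hF]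
    simp only [ContinuousLinearMap.sub_apply, ContinuousLinearMap.add_apply,
      ContinuousLinearMap.smul_apply, ContinuousLinearMap.coe_smul', Pi.smul_apply,
      PiLp.proj_apply, smul_eq_mul, PiLp.toLp_apply]
    simp only [Matrix.cons_val_zero, Matrix.cons_val_one, Matrix.head_cons,
      Matrix.cons_val_two, Matrix.tail_cons, Matrix.cons_val_three]
    ring
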